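/- Let A be analytic on the open unit disc 𝔻 and suppose there are a constant 0 ≤ K < ∞ and a function ε : [0,1) → [0,∞) with ε(r) → 0 as r → 1⁻ such that |A(z)|(1−|z|²)² ≤ K + ε(|z|) for all z ∈ 𝔻. Then every solution f of f'' + A f = 0 satisfies sup_{z∈𝔻} |f(z)|(1−|z|²)^p < ∞ for every p with (√(1+K)−1)/2 < p < ∞. -/

import Mathlib

open Complex Metric Filter Topology intervalIntegral Set MeasureTheory



lemma taylor_two {E : Type*} [NormedAddCommGroup E] [NormedSpace ℝ E] [CompleteSpace E]
    (g g1 g2 : ℝ → E) (a b : ℝ) (hab : a ≤ b)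
    (h1 : ∀ s ∈ Set.Icc a b, HasDerivAt g (g1 s) s)
    (h2 : ∀ s ∈ Set.Icc a b, HasDerivAt g1 (g2 s) s)
    (hc2 : ContinuousOn g2 (Set.Icc a b)) :
    g b = g a + (b - a) • g1 a + ∫ s in a..b, (b - s) • g2 s := by
  have hF : ∀ s ∈ Set.uIcc a b,
      HasDerivAt (fun t => g t + (b - t) • g1 t) ((b - s) • g2 s) s := by
    intro s hs
    rw [Set.uIcc_of_le hab] at hs
    have h := (h1 s hs).add (((hasDerivAt_const s b).sub (hasDerivAt_id s)).smul (h2 s hs))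
    refine h.congr_deriv ?_
    simp only [zero_sub]
    rw [neg_smul, one_smul]
    abel
  have hint : IntervalIntegrable (fun s => (b - s) • g2 s) volume a b := by
    apply ContinuousOn.intervalIntegrable
    rw [Set.uIcc_of_le hab]
    exact (continuousOn_const.sub continuousOn_id).smul hc2
  have h := intervalIntegral.integral_eq_sub_of_hasDerivAt hF hint
  rw [h]
  simp only [sub_self, zero_smul, add_zero]
  abel


lemma volterra_lt {u v a : ℝ → ℝ} {r₀ C : ℝ} (hr₀ : r₀ < 1)
    (hu : ContinuousOn u (Set.Ico r₀ 1)) (hv : ContinuousOn v (Set.Ico r₀ 1))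
    (ha : ContinuousOn a (Set.Ico r₀ 1)) (ha0 : ∀ s ∈ Set.Ico r₀ 1, 0 ≤ a s)
    (hule : ∀ r ∈ Set.Ico r₀ 1, u r ≤ C + ∫ s in r₀..r, (r - s) * (a s * u s))
    (hvgt : ∀ r ∈ Set.Ico r₀ 1, C + (∫ s in r₀..r, (r - s) * (a s * v s)) < v r) :
    ∀ r ∈ Set.Ico r₀ 1, u r < v r := by
  by_contra hcon
  push_neg at hcon
  obtain ⟨r₁, hr₁, hvu⟩ := hcon
  have hIcc : Set.Icc r₀ r₁ ⊆ Set.Ico r₀ 1 := fun x hx => ⟨hx.1, lt_of_le_of_lt hx.2 hr₁.2⟩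
  set S : Set ℝ := {r ∈ Set.Icc r₀ r₁ | v r ≤ u r} with hS
  have hSne : S.Nonempty := ⟨r₁, ⟨hr₁.1, le_refl _⟩, hvu⟩
  have hSbdd : BddBelow S := ⟨r₀, fun x hx => hx.1.1⟩
  have hSclosed : IsClosed S := by
    have hw : ContinuousOn (fun r => u r - v r) (Set.Icc r₀ r₁) :=
      (hu.mono hIcc).sub (hv.mono hIcc)
    have : S = Set.Icc r₀ r₁ ∩ (fun r => u r - v r) ⁻¹' Set.Ici 0 := by
      ext x; simp only [hS, Set.mem_setOf_eq, Set.mem_inter_iff, Set.mem_preimage, Set.mem_Ici, sub_nonneg]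
    rw [this]
    exact hw.preimage_isClosed_of_isClosed isClosed_Icc isClosed_Ici
  set rs := sInf S with hrs
  have hrsS : rs ∈ S := hSclosed.csInf_mem hSne hSbdd
  have hrsIco : rs ∈ Set.Ico r₀ 1 := hIcc hrsS.1
  -- r₀ ∉ S
  have hur₀ : u r₀ ≤ C := by
    have := hule r₀ ⟨le_refl _, hr₀⟩
    simpa using this
  have hvr₀ : C < v r₀ := by
    have := hvgt r₀ ⟨le_refl _, hr₀⟩
    simpa using this
  have hr₀rs : r₀ < rs := by
    rcases lt_or_eq_of_le hrsS.1.1 with h | h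
    · exact h
    · exfalso; have := hrsS.2; rw [← h] at this; linarith
  -- pointwise comparison on Icc r₀ rs
  have hlt : ∀ s ∈ Set.Ico r₀ rs, u s < v s := by
    intro s hs
    by_contra hle
    push_neg at hle
    have hsS : s ∈ S := ⟨⟨hs.1, le_trans hs.2.le hrsS.1.2⟩, hle⟩
    exact absurd (csInf_le hSbdd hsS) (not_le.mpr hs.2)
  have hIccrs : Set.Icc r₀ rs ⊆ Set.Ico r₀ 1 :=
    fun x hx => ⟨hx.1, lt_of_le_of_lt hx.2 hrsIco.2⟩
  have hint1 : IntervalIntegrable (fun s => (rs - s) * (a s * u s)) volume r₀ rs := by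
    apply ContinuousOn.intervalIntegrable
    rw [Set.uIcc_of_le hr₀rs.le]
    exact (continuousOn_const.sub continuousOn_id).mul
      ((ha.mono hIccrs).mul (hu.mono hIccrs))
  have hint2 : IntervalIntegrable (fun s => (rs - s) * (a s * v s)) volume r₀ rs := by
    apply ContinuousOn.intervalIntegrable
    rw [Set.uIcc_of_le hr₀rs.le]
    exact (continuousOn_const.sub continuousOn_id).mul
      ((ha.mono hIccrs).mul (hv.mono hIccrs))
  have hmono : (∫ s in r₀..rs, (rs - s) * (a s * u s)) ≤
      ∫ s in r₀..rs, (rs - s) * (a s * v s) := by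
    apply intervalIntegral.integral_mono_on hr₀rs.le hint1 hint2
    intro s hs
    rcases eq_or_lt_of_le hs.2 with h | h
    · simp [h]
    · have huv : u s ≤ v s := (hlt s ⟨hs.1, h⟩).le
      have ha' : 0 ≤ a s := ha0 s (hIccrs hs)
      have : a s * u s ≤ a s * v s := mul_le_mul_of_nonneg_left huv ha'
      exact mul_le_mul_of_nonneg_left this (by linarith)
  have h1 := hule rs hrsIco
  have h2 := hvgt rs hrsIco
  have := hrsS.2
  linarith


lemma hasDerivAt_one_sub_rpow {s : ℝ} (q : ℝ) (hs : s < 1) :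
    HasDerivAt (fun t : ℝ => (1 - t) ^ q) (-q * (1 - s) ^ (q - 1)) s := by
  have h0 : (0:ℝ) < 1 - s := by linarith
  have h := Real.hasDerivAt_rpow_const (x := 1 - s) (p := q) (Or.inl h0.ne')
  have h2 : HasDerivAt (fun t : ℝ => 1 - t) (-1) s := by
    simpa using (hasDerivAt_id s).const_sub (1:ℝ)
  have h3 := h.comp s h2
  refine h3.congr_deriv ?_
  ring


theorem stmt_2 (A : ℂ → ℂ) (hA : AnalyticOnNhd ℂ A (ball (0:ℂ) 1))
    (K : ℝ) (hK : 0 ≤ K) (ε : ℝ → ℝ) (hε0 : ∀ r ∈ Set.Ico (0:ℝ) 1, 0 ≤ ε r)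
    (hεlim : Tendsto ε (𝓝[<] (1:ℝ)) (𝓝 0))
    (hbound : ∀ z ∈ ball (0:ℂ) 1,
      ‖A z‖ * (1 - ‖z‖ ^ 2) ^ 2 ≤ K + ε ‖z‖)
    (f : ℂ → ℂ) (hf : AnalyticOnNhd ℂ f (ball (0:ℂ) 1))
    (hsol : ∀ z ∈ ball (0:ℂ) 1, deriv (deriv f) z + A z * f z = 0) :
    ∀ p : ℝ, (Real.sqrt (1 + K) - 1) / 2 < p →
      ∃ M : ℝ, ∀ z ∈ ball (0:ℂ) 1,
        ‖f z‖ * (1 - ‖z‖ ^ 2) ^ p ≤ M := by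
  intro p hp
  have hsq : Real.sqrt (1+K) < 2*p+1 := by linarith
  have hp0 : 0 < p := by
    have h1 : Real.sqrt 1 ≤ Real.sqrt (1+K) := Real.sqrt_le_sqrt (by linarith)
    rw [Real.sqrt_one] at h1
    linarith
  have hKlt : K < 4*(p*(p+1)) := by
    have h := Real.sq_sqrt (by linarith : (0:ℝ) ≤ 1+K)
    nlinarith [Real.sqrt_nonneg (1+K)]
  set l : ℝ := p*(p+1) with hl
  have hl0 : 0 < l := by positivity
  -- choose r₀ such that K + ε s ≤ l (1+s)² on [r₀, 1)
  have hev : ∀ᶠ s in 𝓝[<] (1:ℝ), K + ε s ≤ l*(1+s)^2 := by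
    have h1 : Tendsto (fun s => K + ε s) (𝓝[<] (1:ℝ)) (𝓝 (K+0)) :=
      tendsto_const_nhds.add hεlim
    have h2 : Tendsto (fun s : ℝ => l*(1+s)^2) (𝓝[<] (1:ℝ)) (𝓝 (l*(1+1)^2)) := by
      apply Tendsto.mono_left _ nhdsWithin_le_nhds
      exact Continuous.tendsto (by continuity) 1
    exact (h1.eventually_lt h2 (by nlinarith)).mono (fun s hs => hs.le)
  obtain ⟨b, hb1, hb⟩ := mem_nhdsLT_iff_exists_Ioo_subset.mp hev
  set r₀ : ℝ := max ((b+1)/2) (1/2) with hr₀def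
  have hbb : b < 1 := hb1
  have hr₀1 : r₀ < 1 := by
    apply max_lt
    · linarith
    · norm_num
  have hr₀b : b < r₀ := lt_of_lt_of_le (by linarith) (le_max_left _ _)
  have hr₀0 : (0:ℝ) < r₀ := lt_of_lt_of_le (by norm_num) (le_max_right _ _)
  have hKey : ∀ s ∈ Set.Ico r₀ 1, K + ε s ≤ l*(1+s)^2 :=
    fun s hs => hb ⟨lt_of_lt_of_le hr₀b hs.1, hs.2⟩
  -- analyticity of derivatives
  have hf1 : AnalyticOnNhd ℂ (deriv f) (ball (0:ℂ) 1) := hf.deriv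
  have hf2 : AnalyticOnNhd ℂ (deriv (deriv f)) (ball (0:ℂ) 1) := hf1.deriv
  -- bounds on the compact disc of radius r₀
  have hsub : closedBall (0:ℂ) r₀ ⊆ ball (0:ℂ) 1 := by
    intro w hw
    rw [mem_closedBall, dist_zero_right] at hw
    rw [mem_ball, dist_zero_right]
    linarith
  obtain ⟨M₀', hM₀'⟩ := (isCompact_closedBall (0:ℂ) r₀).exists_bound_of_continuousOn
    (hf.continuousOn.mono hsub)
  obtain ⟨MA', hMA'⟩ := (isCompact_closedBall (0:ℂ) r₀).exists_bound_of_continuousOn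
    (hA.continuousOn.mono hsub)
  set M₀ : ℝ := max M₀' 0 with hM₀def
  set MA : ℝ := max MA' 0 with hMAdef
  have hM₀0 : 0 ≤ M₀ := le_max_right _ _
  have hMA0 : 0 ≤ MA := le_max_right _ _
  have hM₀ : ∀ w ∈ closedBall (0:ℂ) r₀, ‖f w‖ ≤ M₀ :=
    fun w hw => le_trans (hM₀' w hw) (le_max_left _ _)
  have hMA : ∀ w ∈ closedBall (0:ℂ) r₀, ‖A w‖ ≤ MA :=
    fun w hw => le_trans (hMA' w hw) (le_max_left _ _)
  set C : ℝ := ‖f 0‖ + ‖deriv f 0‖ with hCdef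
  have hC0 : 0 ≤ C := add_nonneg (norm_nonneg _) (norm_nonneg _)
  set C2 : ℝ := C + r₀ * (MA * M₀) with hC2def
  have hC20 : 0 ≤ C2 := by positivity
  set B : ℝ := (C2+1) * (1-r₀)^p with hBdef
  have h1r₀ : (0:ℝ) < 1 - r₀ := by linarith
  have hB0 : 0 < B := by positivity
  set v : ℝ → ℝ := fun r => B * (1-r)^(-p) with hvdef
  have hvcont : ContinuousOn v (Set.Ico r₀ 1) := by
    apply continuousOn_const.mul
    apply ContinuousOn.rpow_const
    · exact (continuous_const.sub continuous_id).continuousOn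
    · intro x hx
      exact Or.inl (sub_ne_zero.mpr hx.2.ne')
  have hvpos : ∀ r ∈ Set.Ico r₀ 1, 0 < v r := by
    intro r hr
    have : (0:ℝ) < 1 - r := by linarith [hr.2]
    positivity
  -- the key radial estimate
  have key : ∀ ζ : ℂ, ‖ζ‖ = 1 → ∀ r ∈ Set.Ico r₀ 1,
      ‖f ((r:ℂ)*ζ)‖ < v r := by
    intro ζ hζ r hr
    have hmem : ∀ s : ℝ, s ∈ Set.Ico (0:ℝ) 1 → (s:ℂ)*ζ ∈ ball (0:ℂ) 1 := by
      intro s hs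
      rw [mem_ball, dist_zero_right, norm_mul, hζ, mul_one,
        Complex.norm_real, Real.norm_eq_abs, _root_.abs_of_nonneg hs.1]
      exact hs.2
    have habs : ∀ s : ℝ, 0 ≤ s → ‖(s:ℂ)*ζ‖ = s := by
      intro s hs
      rw [norm_mul, hζ, mul_one, Complex.norm_real, Real.norm_eq_abs, _root_.abs_of_nonneg hs]
    set u : ℝ → ℝ := fun s => ‖f ((s:ℂ)*ζ)‖ with hudef
    set a : ℝ → ℝ := fun s => ‖A ((s:ℂ)*ζ)‖ with hadef
    have hcs : Continuous (fun s : ℝ => (s:ℂ)*ζ) := Complex.continuous_ofReal.mul continuous_const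
    have hmap : Set.MapsTo (fun s : ℝ => (s:ℂ)*ζ) (Set.Ico (0:ℝ) 1) (ball (0:ℂ) 1) := hmem
    have hucont : ContinuousOn u (Set.Ico (0:ℝ) 1) :=
      continuous_norm.comp_continuousOn ((hf.continuousOn).comp hcs.continuousOn hmap)
    have hacont : ContinuousOn a (Set.Ico (0:ℝ) 1) :=
      continuous_norm.comp_continuousOn ((hA.continuousOn).comp hcs.continuousOn hmap)
    have hu0 : ∀ s, 0 ≤ u s := fun s => norm_nonneg _
    have ha0 : ∀ s, 0 ≤ a s := fun s => norm_nonneg _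
    have hIco01 : Set.Ico r₀ 1 ⊆ Set.Ico (0:ℝ) 1 := fun x hx => ⟨le_trans hr₀0.le hx.1, hx.2⟩
    -- Step A
    have stepA : ∀ r' ∈ Set.Ico (0:ℝ) 1,
        u r' ≤ C + ∫ s in (0:ℝ)..r', (r' - s) * (a s * u s) := by
      intro r' hr'
      have hIccsub : Set.Icc (0:ℝ) r' ⊆ Set.Ico (0:ℝ) 1 :=
        fun x hx => ⟨hx.1, lt_of_le_of_lt hx.2 hr'.2⟩
      set g2 : ℝ → ℂ := fun s => deriv (deriv f) ((s:ℂ)*ζ) * ζ * ζ with hg2def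
      have hd1 : ∀ s ∈ Set.Icc (0:ℝ) r',
          HasDerivAt (fun t : ℝ => f ((t:ℂ)*ζ)) (deriv f ((s:ℂ)*ζ) * ζ) s := by
        intro s hs
        have hz := hmem s (hIccsub hs)
        have h1 : HasDerivAt f (deriv f ((s:ℂ)*ζ)) ((s:ℂ)*ζ) :=
          ((hf _ hz).differentiableAt).hasDerivAt
        have h2 : HasDerivAt (fun w : ℂ => w * ζ) ζ ((s:ℝ):ℂ) := hasDerivAt_mul_const ζ
        exact (HasDerivAt.comp ((s:ℝ):ℂ) h1 h2).comp_ofReal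
      have hd2 : ∀ s ∈ Set.Icc (0:ℝ) r',
          HasDerivAt (fun t : ℝ => deriv f ((t:ℂ)*ζ) * ζ) (g2 s) s := by
        intro s hs
        have hz := hmem s (hIccsub hs)
        have h1 : HasDerivAt (deriv f) (deriv (deriv f) ((s:ℂ)*ζ)) ((s:ℂ)*ζ) :=
          ((hf1 _ hz).differentiableAt).hasDerivAt
        have h2 : HasDerivAt (fun w : ℂ => w * ζ) ζ ((s:ℝ):ℂ) := hasDerivAt_mul_const ζ
        exact ((HasDerivAt.comp ((s:ℝ):ℂ) h1 h2).mul_const ζ).comp_ofReal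
      have hg2cont : ContinuousOn g2 (Set.Icc (0:ℝ) r') := by
        apply ContinuousOn.mul (ContinuousOn.mul ?_ continuousOn_const) continuousOn_const
        exact (hf2.continuousOn).comp hcs.continuousOn (fun x hx => hmem x (hIccsub hx))
      have htay := taylor_two (fun t : ℝ => f ((t:ℂ)*ζ)) (fun t => deriv f ((t:ℂ)*ζ) * ζ)
        g2 0 r' hr'.1 hd1 hd2 hg2cont
      have h0 : (((0:ℝ)):ℂ) * ζ = 0 := by simp
      have hnorm3 : u r' ≤ C + ‖∫ s in (0:ℝ)..r', (r' - s) • g2 s‖ := by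
        have hur' : u r' = ‖f (((r':ℝ):ℂ)*ζ)‖ := by rw [hudef]
        rw [hur']
        have e0 : f (((r':ℝ):ℂ)*ζ) = f (((0:ℝ):ℂ)*ζ) + (r' - 0) • (deriv f (((0:ℝ):ℂ)*ζ) * ζ)
            + ∫ s in (0:ℝ)..r', (r' - s) • g2 s := htay
        rw [e0]
        refine le_trans (norm_add₃_le) ?_
        have e1 : ‖f (((0:ℝ):ℂ)*ζ)‖ = ‖f 0‖ := by
          rw [h0]
        have e2 : ‖(r' - 0 : ℝ) • (deriv f (((0:ℝ):ℂ)*ζ) * ζ)‖ ≤ ‖deriv f 0‖ := by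
          rw [h0, norm_smul, Real.norm_eq_abs, sub_zero, _root_.abs_of_nonneg hr'.1,
            norm_mul, hζ, mul_one]
          have h2 := hr'.2
          nlinarith [norm_nonneg (deriv f 0)]
        rw [hCdef]
        linarith
      have hbound2 : ‖∫ s in (0:ℝ)..r', (r' - s) • g2 s‖ ≤
          ∫ s in (0:ℝ)..r', (r' - s) * (a s * u s) := by
        refine le_trans (intervalIntegral.norm_integral_le_integral_norm hr'.1) ?_
        refine le_of_eq (intervalIntegral.integral_congr ?_)
        intro s hs
        rw [Set.uIcc_of_le hr'.1] at hs
        have hz := hmem s (hIccsub hs)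
        have hsol' : deriv (deriv f) ((s:ℂ)*ζ) = -(A ((s:ℂ)*ζ) * f ((s:ℂ)*ζ)) :=
          eq_neg_of_add_eq_zero_left (hsol _ hz)
        simp only [hg2def, hudef, hadef]
        rw [norm_smul, Real.norm_eq_abs,
          _root_.abs_of_nonneg (by linarith [hs.2] : (0:ℝ) ≤ r' - s), hsol',
          norm_mul, norm_mul, norm_neg, norm_mul, hζ, mul_one, mul_one]
      linarith
    -- Step B
    have stepB : ∀ r' ∈ Set.Ico r₀ 1,
        u r' ≤ C2 + ∫ s in r₀..r', (r' - s) * (a s * u s) := by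
      intro r' hr'
      have h0r' : r' ∈ Set.Ico (0:ℝ) 1 := ⟨le_trans hr₀0.le hr'.1, hr'.2⟩
      have hA1 := stepA r' h0r'
      have hIcc1 : Set.Icc (0:ℝ) r₀ ⊆ Set.Ico (0:ℝ) 1 :=
        fun x hx => ⟨hx.1, lt_of_le_of_lt hx.2 hr₀1⟩
      have hIcc2 : Set.Icc r₀ r' ⊆ Set.Ico (0:ℝ) 1 :=
        fun x hx => ⟨le_trans hr₀0.le hx.1, lt_of_le_of_lt hx.2 hr'.2⟩
      have hint1 : IntervalIntegrable (fun s => (r' - s) * (a s * u s)) volume 0 r₀ := by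
        apply ContinuousOn.intervalIntegrable
        rw [Set.uIcc_of_le hr₀0.le]
        exact (continuousOn_const.sub continuousOn_id).mul
          ((hacont.mono hIcc1).mul (hucont.mono hIcc1))
      have hint2 : IntervalIntegrable (fun s => (r' - s) * (a s * u s)) volume r₀ r' := by
        apply ContinuousOn.intervalIntegrable
        rw [Set.uIcc_of_le hr'.1]
        exact (continuousOn_const.sub continuousOn_id).mul
          ((hacont.mono hIcc2).mul (hucont.mono hIcc2))
      rw [← intervalIntegral.integral_add_adjacent_intervals hint1 hint2] at hA1
      have hfirst : (∫ s in (0:ℝ)..r₀, (r' - s) * (a s * u s)) ≤ r₀ * (MA * M₀) := by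
        have hmono := intervalIntegral.integral_mono_on hr₀0.le hint1
          (_root_.intervalIntegrable_const (c := MA * M₀)) ?_
        · rw [intervalIntegral.integral_const, sub_zero, smul_eq_mul] at hmono
          exact hmono
        · intro x hx
          have hxmem : ((x:ℂ)*ζ) ∈ closedBall (0:ℂ) r₀ := by
            rw [mem_closedBall, dist_zero_right, habs x hx.1]
            exact hx.2
          have haMA : a x ≤ MA := hMA _ hxmem
          have huM0 : u x ≤ M₀ := hM₀ _ hxmem
          have h1 : r' - x ≤ 1 := by linarith [hx.1, hr'.2]
          have h2 : (0:ℝ) ≤ r' - x := by linarith [hx.2, hr'.1]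
          calc (r' - x) * (a x * u x) ≤ 1 * (MA * M₀) :=
                mul_le_mul h1 (mul_le_mul haMA huM0 (hu0 x) hMA0)
                  (mul_nonneg (ha0 x) (hu0 x)) (by norm_num)
            _ = MA * M₀ := one_mul _
      rw [hC2def]
      linarith
    -- Step V (barrier)
    have stepV : ∀ r' ∈ Set.Ico r₀ 1,
        C2 + (∫ s in r₀..r', (r' - s) * (a s * v s)) < v r' := by
      intro r' hr'
      set v1 : ℝ → ℝ := fun s => B * (p * (1-s)^(-p-1)) with hv1def
      set v2 : ℝ → ℝ := fun s => B * (l * (1-s)^(-p-2)) with hv2def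
      have hIcc : Set.Icc r₀ r' ⊆ Set.Ico r₀ 1 :=
        fun x hx => ⟨hx.1, lt_of_le_of_lt hx.2 hr'.2⟩
      have hd1 : ∀ s ∈ Set.Icc r₀ r', HasDerivAt v (v1 s) s := by
        intro s hs
        have hs1 : s < 1 := lt_of_le_of_lt hs.2 hr'.2
        have h := (hasDerivAt_one_sub_rpow (-p) hs1).const_mul B
        rw [neg_neg] at h
        exact h
      have hd2 : ∀ s ∈ Set.Icc r₀ r', HasDerivAt v1 (v2 s) s := by
        intro s hs
        have hs1 : s < 1 := lt_of_le_of_lt hs.2 hr'.2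
        have h := (hasDerivAt_one_sub_rpow (-p-1) hs1).const_mul (B*p)
        rw [show (-p-1-1 : ℝ) = -p-2 by ring] at h
        have hfun : v1 = fun t => (B*p) * (1-t)^(-p-1) := by
          funext t; rw [hv1def]; ring
        rw [hfun]
        refine h.congr_deriv ?_
        rw [hv2def, hl]
        ring
      have hv2cont : ContinuousOn v2 (Set.Icc r₀ r') := by
        apply continuousOn_const.mul
        apply continuousOn_const.mul
        apply ContinuousOn.rpow_const (continuous_const.sub continuous_id).continuousOn
        intro x hx
        exact Or.inl (sub_ne_zero.mpr (lt_of_le_of_lt hx.2 hr'.2).ne')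
      have htay := taylor_two v v1 v2 r₀ r' hr'.1 hd1 hd2 hv2cont
      simp only [smul_eq_mul] at htay
      have hvr₀ : v r₀ = C2 + 1 := by
        rw [hvdef]
        simp only []
        rw [hBdef, mul_assoc, ← Real.rpow_add h1r₀]
        norm_num
      have hv1pos : 0 ≤ (r' - r₀) * v1 r₀ := by
        apply mul_nonneg (by linarith [hr'.1])
        have hv1r : v1 r₀ = B * (p * (1-r₀)^(-p-1)) := rfl
        rw [hv1r]
        have h' : (0:ℝ) < (1-r₀) ^ (-p-1) := Real.rpow_pos_of_pos h1r₀ _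
        exact mul_nonneg hB0.le (mul_nonneg hp0.le h'.le)
      have hptw : ∀ x ∈ Set.Icc r₀ r', (r'-x)*(a x*v x) ≤ (r'-x)*(v2 x) := by
        intro x hx
        have hx1 : x < 1 := lt_of_le_of_lt hx.2 hr'.2
        have h1x : (0:ℝ) < 1 - x := by linarith
        have hx0 : (0:ℝ) ≤ x := le_trans hr₀0.le hx.1
        have hzb : ((x:ℂ)*ζ) ∈ ball (0:ℂ) 1 := hmem x ⟨hx0, hx1⟩
        have hb1 := hbound _ hzb
        rw [habs x hx0] at hb1
        have hb2 := hKey x ⟨hx.1, hx1⟩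
        have h1px : (0:ℝ) < (1+x)^2 := by positivity
        have e : (a x * (1-x)^2) * (1+x)^2 = a x * (1 - x^2)^2 := by ring
        have key2 : (a x * (1-x)^2) * (1+x)^2 ≤ l * (1+x)^2 := by
          rw [e]
          calc a x * (1 - x^2)^2 ≤ K + ε x := hb1
            _ ≤ l * (1+x)^2 := hb2
        have hax : a x * (1-x)^2 ≤ l := le_of_mul_le_mul_right key2 h1px
        have hsplit : (1-x)^(-p) = (1-x)^(-p-2) * ((1-x)^(2:ℕ)) := by
          rw [← Real.rpow_natCast (1-x) 2, ← Real.rpow_add h1x]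
          norm_num
        have havx : a x * v x ≤ v2 x := by
          have hvx : v x = B * (1-x)^(-p) := rfl
          have hv2x : v2 x = B * (l * (1-x)^(-p-2)) := rfl
          rw [hvx, hv2x, hsplit]
          have hrp : (0:ℝ) < (1-x) ^ (-p-2) := Real.rpow_pos_of_pos h1x _
          calc a x * (B * ((1-x)^(-p-2) * (1-x)^(2:ℕ)))
              = (B * (1-x)^(-p-2)) * (a x * (1-x)^2) := by ring
            _ ≤ (B * (1-x)^(-p-2)) * l :=
                mul_le_mul_of_nonneg_left hax (mul_nonneg hB0.le hrp.le)
            _ = B * (l * (1-x)^(-p-2)) := by ring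
        exact mul_le_mul_of_nonneg_left havx (by linarith [hx.2])
      have hint_av : IntervalIntegrable (fun s => (r'-s)*(a s*v s)) volume r₀ r' := by
        apply ContinuousOn.intervalIntegrable
        rw [Set.uIcc_of_le hr'.1]
        exact (continuousOn_const.sub continuousOn_id).mul
          (((hacont.mono (fun x hx => hIco01 (hIcc hx)))).mul (hvcont.mono hIcc))
      have hint_v2 : IntervalIntegrable (fun s => (r'-s)*(v2 s)) volume r₀ r' := by
        apply ContinuousOn.intervalIntegrable
        rw [Set.uIcc_of_le hr'.1]
        exact (continuousOn_const.sub continuousOn_id).mul hv2cont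
      have hmono := intervalIntegral.integral_mono_on hr'.1 hint_av hint_v2 hptw
      linarith [htay, hvr₀, hv1pos, hmono]
    exact volterra_lt hr₀1 (hucont.mono hIco01) hvcont (hacont.mono hIco01)
      (fun s _ => ha0 s) stepB stepV r hr
  -- assemble
  refine ⟨max M₀ (B * 2^p), ?_⟩
  intro z hz
  rw [mem_ball, dist_zero_right] at hz
  have hr0 : 0 ≤ ‖z‖ := norm_nonneg _
  by_cases hcase : ‖z‖ < r₀
  · have hmem0 : z ∈ closedBall (0:ℂ) r₀ := by
      rw [mem_closedBall, dist_zero_right]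
      exact hcase.le
    have h1 : ‖f z‖ ≤ M₀ := hM₀ z hmem0
    have hlt1 : ‖z‖ ^ 2 < 1 := pow_lt_one₀ hr0 hz two_ne_zero
    have h2 : (1 - ‖z‖ ^ 2 : ℝ) ^ p ≤ 1 :=
      Real.rpow_le_one (by linarith) (by linarith [sq_nonneg ‖z‖]) hp0.le
    calc ‖f z‖ * (1 - ‖z‖ ^ 2) ^ p ≤ M₀ * 1 :=
        mul_le_mul h1 h2 (Real.rpow_nonneg (by linarith) _) hM₀0
      _ = M₀ := mul_one _
      _ ≤ max M₀ (B * 2^p) := le_max_left _ _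
  · rw [not_lt] at hcase
    set r := ‖z‖ with hrdef
    have hrpos : 0 < r := lt_of_lt_of_le hr₀0 hcase
    set ζ := z / (r:ℂ) with hζdef
    have hζ1 : ‖ζ‖ = 1 := by
      rw [hζdef, norm_div, Complex.norm_real, Real.norm_eq_abs, _root_.abs_of_nonneg hr0]
      exact div_self hrpos.ne'
    have hzeq : ((r:ℝ):ℂ) * ζ = z := by
      rw [hζdef]
      have : ((r:ℝ):ℂ) ≠ 0 := by
        simp only [ne_eq, Complex.ofReal_eq_zero]
        exact hrpos.ne'
      field_simp
    have hkey := key ζ hζ1 r ⟨hcase, hz⟩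
    rw [hzeq] at hkey
    have h1r : (0:ℝ) < 1 - r := by linarith
    have h2 : (1 - r^2 : ℝ) ^ p = (1-r)^p * (1+r)^p := by
      rw [show (1 - r^2 : ℝ) = (1-r)*(1+r) by ring, Real.mul_rpow h1r.le (by linarith)]
    have hvr : v r = B * (1-r)^(-p) := rfl
    rw [hvr] at hkey
    have hrp1 : (0:ℝ) < (1-r)^p := Real.rpow_pos_of_pos h1r _
    have hrp2 : (0:ℝ) ≤ (1+r)^p := Real.rpow_nonneg (by linarith) _
    have hcancel : (1-r)^(-p) * (1-r)^p = 1 := by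
      rw [← Real.rpow_add h1r]
      norm_num
    calc ‖f z‖ * (1 - r^2)^p
        = ‖f z‖ * ((1-r)^p * (1+r)^p) := by rw [h2]
      _ ≤ (B * (1-r)^(-p)) * ((1-r)^p * (1+r)^p) :=
          mul_le_mul_of_nonneg_right hkey.le (mul_nonneg hrp1.le hrp2)
      _ = B * ((1-r)^(-p) * (1-r)^p) * (1+r)^p := by ring
      _ = B * (1+r)^p := by rw [hcancel]; ring
      _ ≤ B * 2^p := mul_le_mul_of_nonneg_left
          (Real.rpow_le_rpow (by linarith) (by linarith) hp0.le) hB0.le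
      _ ≤ max M₀ (B * 2^p) := le_max_right _ _
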